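/- Let d be a natural number. Then ∑_{k=0}^{d} k · C_{d−k} = ∑_{j=1}^{d+1} ((j−1)/3) · (2·binom(2d, d−j) − (d+1)·C_{d,j}) − d, and also ∑_{k=0}^{d} k · C_{d−k} = ∑_{j=1}^{d+1} ((j+1)/3) · (2·binom(2d, d−j) − (d+1)·C_{d,j}) + 2d + 1. -/
import Mathlib


/-- `chi3 a` is the Legendre symbol `(a/3)`: the unique element of `{0, 1, -1}`
congruent to `a` modulo `3`. -/
def chi3 (a : ℤ) : ℤ := if a % 3 = 0 then 0 else if a % 3 = 1 then 1 else -1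

/-- `chooseN a b` is the binomial coefficient `binom(a, b)` with natural upper argument
and integer lower argument; it is `0` when `b < 0` or `b > a`. -/
def chooseN (a : ℕ) (b : ℤ) : ℤ := if 0 ≤ b then (a.choose b.toNat : ℤ) else 0

/-- The generalized Catalan-type numbers
`C_{n,j} = 2·binom(2n, n−j) − binom(2n, n−1−j) − binom(2n, n+1−j)`. -/
def catD (n j : ℕ) : ℤ :=
  2 * chooseN (2 * n) ((n : ℤ) - j) - chooseN (2 * n) ((n : ℤ) - 1 - j)
    - chooseN (2 * n) ((n : ℤ) + 1 - j)

open Finset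

lemma chi3_add_one (a : ℤ) : chi3 (a + 1) = -chi3 (a - 1) - chi3 a := by
  unfold chi3; split_ifs <;> omega

lemma chi3_sub_two (a : ℤ) : chi3 (a - 2) = -chi3 (a - 1) - chi3 a := by
  unfold chi3; split_ifs <;> omega

lemma chi3_zero : chi3 0 = 0 := rfl
lemma chi3_one : chi3 1 = 1 := rfl
lemma chi3_neg_one : chi3 (-1) = -1 := rfl

lemma chooseN_neg {a : ℕ} {b : ℤ} (h : b < 0) : chooseN a b = 0 := if_neg (by omega)

lemma chooseN_ofNat (a k : ℕ) : chooseN a (k : ℤ) = (a.choose k : ℤ) := by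
  simp [chooseN]

lemma chooseN_succ (a : ℕ) (b : ℤ) : chooseN (a + 1) b = chooseN a b + chooseN a (b - 1) := by
  rcases lt_trichotomy b 0 with h | h | h
  · rw [chooseN_neg h, chooseN_neg h, chooseN_neg (by omega)]; ring
  · subst h
    have h1 : chooseN (a + 1) 0 = 1 := by simp [chooseN]
    have h2 : chooseN a 0 = 1 := by simp [chooseN]
    have h3 : chooseN a (0 - 1) = 0 := chooseN_neg (by omega)
    rw [h1, h2, h3]; ring
  · obtain ⟨k, rfl⟩ : ∃ k : ℕ, b = (k : ℤ) + 1 := ⟨(b - 1).toNat, by omega⟩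
    rw [show (k : ℤ) + 1 - 1 = (k : ℤ) by ring,
      show (k : ℤ) + 1 = ((k + 1 : ℕ) : ℤ) by push_cast; ring,
      chooseN_ofNat, chooseN_ofNat, chooseN_ofNat, Nat.choose_succ_succ']
    push_cast; ring

lemma chooseN_pascal2 (a : ℕ) (b : ℤ) :
    chooseN (a + 2) b = chooseN a b + 2 * chooseN a (b - 1) + chooseN a (b - 2) := by
  rw [show a + 2 = a + 1 + 1 from rfl, chooseN_succ, chooseN_succ, chooseN_succ,
    show b - 1 - 1 = b - 2 by ring]
  ring

lemma cb_eq (n : ℕ) : chooseN (2 * n) (n : ℤ) = ((n : ℤ) + 1) * catalan n := by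
  rw [chooseN_ofNat]
  have := succ_mul_catalan_eq_centralBinom n
  have h2 : Nat.centralBinom n = (2 * n).choose n := rfl
  rw [← h2, ← this]
  push_cast; ring

lemma cb1_eq (n : ℕ) : chooseN (2 * n) ((n : ℤ) - 1) = (n : ℤ) * catalan n := by
  cases n with
  | zero => simp [chooseN_neg]
  | succ k =>
    have hcast : ((k + 1 : ℕ) : ℤ) - 1 = (k : ℤ) := by push_cast; ring
    rw [hcast, chooseN_ofNat]
    -- need : choose (2*(k+1)) k = (k+1) * catalan (k+1) in ℕ
    have habs := Nat.choose_succ_right_eq (2 * (k + 1)) k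
    -- (2(k+1)).choose (k+1) * (k+1) = (2(k+1)).choose k * (2(k+1) - k)
    have hsub : 2 * (k + 1) - k = k + 2 := by omega
    rw [hsub] at habs
    have hcb : (2 * (k + 1)).choose (k + 1) = (k + 1 + 1) * catalan (k + 1) :=
      (succ_mul_catalan_eq_centralBinom (k + 1)).symm
    have : (2 * (k + 1)).choose k * (k + 2) = ((k + 1) * catalan (k + 1)) * (k + 2) := by
      rw [← habs, hcb]; ring
    have := Nat.eq_of_mul_eq_mul_right (show 0 < k + 2 by omega) this
    rw [this]; push_cast; ring

lemma sum_Icc_one (m : ℕ) (f : ℕ → ℤ) : ∑ j ∈ Icc 1 m, f j = ∑ i ∈ range m, f (i + 1) := by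
  induction m with
  | zero => simp
  | succ k ih => rw [Finset.sum_Icc_succ_top (by omega), ih, sum_range_succ]

def Pc (n : ℕ) : ℤ := ∑ k ∈ range n, (catalan k : ℤ)

def Sc (n : ℕ) : ℤ := ∑ k ∈ range n, ((n : ℤ) - 1 - k) * catalan k

def WS (n : ℕ) (g : ℤ → ℤ) : ℤ := ∑ j ∈ Icc 1 n, g j * chooseN (2 * n) ((n : ℤ) - j)

lemma Pc_succ (n : ℕ) : Pc (n + 1) = Pc n + catalan n := sum_range_succ _ _

lemma Sc_succ (n : ℕ) : Sc (n + 1) = Sc n + Pc n := by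
  unfold Sc Pc
  rw [sum_range_succ]
  have h0 : (((n : ℕ) + 1 : ℕ) : ℤ) - 1 - (n : ℤ) = 0 := by push_cast; ring
  rw [h0, zero_mul, add_zero]
  rw [← sum_add_distrib]
  apply sum_congr rfl
  intro k _
  push_cast; ring

lemma master (n : ℕ) (g : ℤ → ℤ) :
    WS (n + 1) g
      = (∑ j ∈ Icc 1 n, (g ((j : ℤ) - 1) + 2 * g j + g ((j : ℤ) + 1)) * chooseN (2 * n) ((n : ℤ) - j))
        + g 1 * chooseN (2 * n) (n : ℤ) - g 0 * chooseN (2 * n) ((n : ℤ) - 1) := by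
  unfold WS
  rw [sum_Icc_one, sum_Icc_one]
  have hLHS : ∑ i ∈ range (n + 1), g ((i + 1 : ℕ) : ℤ) * chooseN (2 * (n + 1)) (((n + 1 : ℕ) : ℤ) - ((i + 1 : ℕ) : ℤ))
      = (∑ i ∈ range (n + 1), g ((i : ℤ) + 1) * chooseN (2 * n) ((n : ℤ) - i))
        + 2 * (∑ i ∈ range (n + 1), g ((i : ℤ) + 1) * chooseN (2 * n) ((n : ℤ) - i - 1))
        + (∑ i ∈ range (n + 1), g ((i : ℤ) + 1) * chooseN (2 * n) ((n : ℤ) - i - 2)) := by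
    rw [mul_sum, ← sum_add_distrib, ← sum_add_distrib]
    apply sum_congr rfl
    intro i _
    have harg : ((n + 1 : ℕ) : ℤ) - ((i + 1 : ℕ) : ℤ) = (n : ℤ) - i := by push_cast; ring
    have hg : ((i + 1 : ℕ) : ℤ) = (i : ℤ) + 1 := by push_cast; ring
    rw [harg, hg, show 2 * (n + 1) = 2 * n + 2 by ring, chooseN_pascal2]
    ring
  rw [hLHS]
  have hT1 : ∑ i ∈ range (n + 1), g ((i : ℤ) + 1) * chooseN (2 * n) ((n : ℤ) - i)
      = (∑ i ∈ range n, g ((i : ℤ) + 2) * chooseN (2 * n) ((n : ℤ) - i - 1))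
        + g 1 * chooseN (2 * n) (n : ℤ) := by
    rw [sum_range_succ' (fun i => g ((i : ℤ) + 1) * chooseN (2 * n) ((n : ℤ) - (i : ℤ))) n]
    have hs : ∑ i ∈ range n, g (((i + 1 : ℕ) : ℤ) + 1) * chooseN (2 * n) ((n : ℤ) - ((i + 1 : ℕ) : ℤ))
        = ∑ i ∈ range n, g ((i : ℤ) + 2) * chooseN (2 * n) ((n : ℤ) - i - 1) := by
      apply sum_congr rfl
      intro i _
      have h1 : ((i + 1 : ℕ) : ℤ) + 1 = (i : ℤ) + 2 := by push_cast; ring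
      have h2 : (n : ℤ) - ((i + 1 : ℕ) : ℤ) = (n : ℤ) - i - 1 := by push_cast; ring
      rw [h1, h2]
    rw [hs]
    norm_num
  have hT2 : ∑ i ∈ range (n + 1), g ((i : ℤ) + 1) * chooseN (2 * n) ((n : ℤ) - i - 1)
      = ∑ i ∈ range n, g ((i : ℤ) + 1) * chooseN (2 * n) ((n : ℤ) - i - 1) := by
    rw [sum_range_succ,
      show (n : ℤ) - (n : ℕ) - 1 = -1 by push_cast; ring, chooseN_neg (by norm_num)]
    ring
  have hT3 : ∑ i ∈ range (n + 1), g ((i : ℤ) + 1) * chooseN (2 * n) ((n : ℤ) - i - 2)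
      = (∑ i ∈ range n, g (i : ℤ) * chooseN (2 * n) ((n : ℤ) - i - 1))
        - g 0 * chooseN (2 * n) ((n : ℤ) - 1) := by
    rw [sum_range_succ,
      show (n : ℤ) - (n : ℕ) - 2 = -2 by push_cast; ring, chooseN_neg (by norm_num), mul_zero, add_zero]
    cases n with
    | zero => simp [chooseN]
    | succ m =>
      have haveL : ∑ i ∈ range (m + 1), g ((i : ℤ) + 1) * chooseN (2 * (m + 1)) (((m + 1 : ℕ) : ℤ) - i - 2)
          = ∑ i ∈ range m, g ((i : ℤ) + 1) * chooseN (2 * (m + 1)) (((m + 1 : ℕ) : ℤ) - i - 2) := by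
        rw [sum_range_succ,
          show ((m + 1 : ℕ) : ℤ) - (m : ℕ) - 2 = -1 by push_cast; ring,
          chooseN_neg (by norm_num)]
        ring
      have haveR : ∑ i ∈ range (m + 1), g (i : ℤ) * chooseN (2 * (m + 1)) (((m + 1 : ℕ) : ℤ) - i - 1)
          = (∑ i ∈ range m, g ((i : ℤ) + 1) * chooseN (2 * (m + 1)) (((m + 1 : ℕ) : ℤ) - i - 2))
            + g 0 * chooseN (2 * (m + 1)) (((m + 1 : ℕ) : ℤ) - 1) := by
        rw [sum_range_succ' (fun i => g (i : ℤ) * chooseN (2 * (m + 1)) (((m + 1 : ℕ) : ℤ) - (i : ℤ) - 1)) m]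
        have hs : ∑ i ∈ range m, g ((i + 1 : ℕ) : ℤ) * chooseN (2 * (m + 1)) (((m + 1 : ℕ) : ℤ) - ((i + 1 : ℕ) : ℤ) - 1)
            = ∑ i ∈ range m, g ((i : ℤ) + 1) * chooseN (2 * (m + 1)) (((m + 1 : ℕ) : ℤ) - i - 2) := by
          apply sum_congr rfl
          intro i _
          have h2 : ((m + 1 : ℕ) : ℤ) - ((i + 1 : ℕ) : ℤ) - 1 = ((m + 1 : ℕ) : ℤ) - i - 2 := by push_cast; ring
          have h1 : ((i + 1 : ℕ) : ℤ) = (i : ℤ) + 1 := by push_cast; ring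
          rw [h2, h1]
        rw [hs]
        norm_num
      rw [haveL, haveR]
      ring
  rw [hT1, hT2, hT3]
  have hR : ∑ i ∈ range n, (g (((i + 1 : ℕ) : ℤ) - 1) + 2 * g ((i + 1 : ℕ) : ℤ) + g (((i + 1 : ℕ) : ℤ) + 1)) * chooseN (2 * n) ((n : ℤ) - ((i + 1 : ℕ) : ℤ))
      = (∑ i ∈ range n, g (i : ℤ) * chooseN (2 * n) ((n : ℤ) - i - 1))
        + 2 * (∑ i ∈ range n, g ((i : ℤ) + 1) * chooseN (2 * n) ((n : ℤ) - i - 1))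
        + (∑ i ∈ range n, g ((i : ℤ) + 2) * chooseN (2 * n) ((n : ℤ) - i - 1)) := by
    rw [mul_sum, ← sum_add_distrib, ← sum_add_distrib]
    apply sum_congr rfl
    intro i _
    have h1 : ((i + 1 : ℕ) : ℤ) - 1 = (i : ℤ) := by push_cast; ring
    have h3 : ((i + 1 : ℕ) : ℤ) + 1 = (i : ℤ) + 2 := by push_cast; ring
    have h4 : (n : ℤ) - ((i + 1 : ℕ) : ℤ) = (n : ℤ) - i - 1 := by push_cast; ring
    have h2 : ((i + 1 : ℕ) : ℤ) = (i : ℤ) + 1 := by push_cast; ring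
    rw [h1, h3, h4, h2]
    ring
  rw [hR]
  ring

def w1 : ℤ → ℤ := fun j => chi3 (j - 1)
def w2 : ℤ → ℤ := fun j => chi3 (j - 1) * j
def w3 : ℤ → ℤ := fun j => chi3 (j - 1) * j ^ 2
def w4 : ℤ → ℤ := fun j => chi3 j
def w5 : ℤ → ℤ := fun j => chi3 j * j
def w6 : ℤ → ℤ := fun j => chi3 j * j ^ 2

lemma master_lin (n : ℕ) (g : ℤ → ℤ) (c1 c2 c3 c4 c5 c6 : ℤ)
    (h : ∀ j : ℤ, g (j - 1) + 2 * g j + g (j + 1)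
      = c1 * w1 j + c2 * w2 j + c3 * w3 j + c4 * w4 j + c5 * w5 j + c6 * w6 j) :
    WS (n + 1) g = c1 * WS n w1 + c2 * WS n w2 + c3 * WS n w3 + c4 * WS n w4
      + c5 * WS n w5 + c6 * WS n w6
      + g 1 * chooseN (2 * n) (n : ℤ) - g 0 * chooseN (2 * n) ((n : ℤ) - 1) := by
  rw [master]
  unfold WS
  have hs : ∑ j ∈ Icc 1 n, (g ((j : ℤ) - 1) + 2 * g j + g ((j : ℤ) + 1)) * chooseN (2 * n) ((n : ℤ) - j)
      = ∑ j ∈ Icc 1 n, (c1 * (w1 j * chooseN (2 * n) ((n : ℤ) - j))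
        + c2 * (w2 j * chooseN (2 * n) ((n : ℤ) - j))
        + c3 * (w3 j * chooseN (2 * n) ((n : ℤ) - j))
        + c4 * (w4 j * chooseN (2 * n) ((n : ℤ) - j))
        + c5 * (w5 j * chooseN (2 * n) ((n : ℤ) - j))
        + c6 * (w6 j * chooseN (2 * n) ((n : ℤ) - j))) := by
    apply sum_congr rfl
    intro j _
    rw [h (j : ℤ)]
    ring
  rw [hs]
  simp only [sum_add_distrib, ← mul_sum]

lemma key_identity (n : ℕ) :
    ((n : ℤ) + 1) * catalan n = (3 * (n : ℤ) - 2) * Pc n - 3 * Sc n + 1 := by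
  induction n with
  | zero => simp [Pc, Sc]
  | succ m ih =>
    have hcb : ((m : ℤ) + 2) * catalan (m + 1) = 2 * (2 * m + 1) * catalan m := by
      have h1 := Nat.succ_mul_centralBinom_succ m
      have h2 : Nat.centralBinom (m + 1) = (m + 1 + 1) * catalan (m + 1) :=
        (succ_mul_catalan_eq_centralBinom (m + 1)).symm
      have h3 : Nat.centralBinom m = (m + 1) * catalan m :=
        (succ_mul_catalan_eq_centralBinom m).symm
      rw [h2, h3] at h1
      have h1' : ((m : ℤ) + 1) * ((m + 1 + 1) * catalan (m + 1)) = 2 * (2 * m + 1) * (((m : ℤ) + 1) * catalan m) := by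
        exact_mod_cast h1
      have h4 : ((m : ℤ) + 1) * (((m : ℤ) + 2) * catalan (m + 1)) = ((m : ℤ) + 1) * (2 * (2 * (m : ℤ) + 1) * catalan m) := by
        linear_combination h1'
      exact mul_left_cancel₀ (by positivity) h4
    rw [Pc_succ, Sc_succ]
    push_cast
    push_cast at ih hcb
    linear_combination hcb + ih

lemma closed_forms (n : ℕ) :
    WS n w1 = (n : ℤ) * Pc n - Pc n - Sc n ∧
    WS n w2 = (n : ℤ) * Pc n - n ∧
    WS n w3 = (n : ℤ) * Sc n + (n : ℤ) ^ 2 - n ∧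
    WS n w4 = (n : ℤ) * Pc n - Sc n ∧
    WS n w5 = (n : ℤ) ∧
    WS n w6 = (n : ℤ) ^ 2 - 2 * n * Sc n := by
  induction n with
  | zero => norm_num [WS, Pc, Sc]
  | succ m ih =>
    obtain ⟨h1, h2, h3, h4, h5, h6⟩ := ih
    have key := key_identity m
    have cb := cb_eq m
    have cb1 := cb1_eq m
    refine ⟨?_, ?_, ?_, ?_, ?_, ?_⟩
    · rw [master_lin m w1 1 0 0 0 0 0 (by
        intro j
        simp only [w1, w2, w3, w4, w5, w6]
        rw [show j - 1 - 1 = j - 2 by ring, show j + 1 - 1 = j by ring, chi3_sub_two j]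
        ring)]
      have b1 : w1 1 = 0 := by norm_num [w1, chi3]
      have b0 : w1 0 = -1 := by norm_num [w1, chi3]
      rw [b1, b0, cb, cb1, h1, h2, h3, h4, h5, h6]
      try simp only [Pc_succ, Sc_succ]
      push_cast
      ring
    · rw [master_lin m w2 1 1 0 2 0 0 (by
        intro j
        simp only [w1, w2, w3, w4, w5, w6]
        rw [show j - 1 - 1 = j - 2 by ring, show j + 1 - 1 = j by ring, chi3_sub_two j]
        ring)]
      have b1 : w2 1 = 0 := by norm_num [w2, chi3]
      have b0 : w2 0 = 0 := by norm_num [w2, chi3]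
      rw [b1, b0, cb, cb1, h1, h2, h3, h4, h5, h6]
      try simp only [Pc_succ, Sc_succ]
      push_cast
      push_cast at key
      linear_combination -key
    · rw [master_lin m w3 (-1) 2 1 0 4 0 (by
        intro j
        simp only [w1, w2, w3, w4, w5, w6]
        rw [show j - 1 - 1 = j - 2 by ring, show j + 1 - 1 = j by ring, chi3_sub_two j]
        ring)]
      have b1 : w3 1 = 0 := by norm_num [w3, chi3]
      have b0 : w3 0 = 0 := by norm_num [w3, chi3]
      rw [b1, b0, cb, cb1, h1, h2, h3, h4, h5, h6]
      try simp only [Pc_succ, Sc_succ]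
      push_cast
      ring
    · rw [master_lin m w4 0 0 0 1 0 0 (by
        intro j
        simp only [w1, w2, w3, w4, w5, w6]
        rw [chi3_add_one j]
        ring)]
      have b1 : w4 1 = 1 := by norm_num [w4, chi3]
      have b0 : w4 0 = 0 := by norm_num [w4, chi3]
      rw [b1, b0, cb, cb1, h1, h2, h3, h4, h5, h6]
      try simp only [Pc_succ, Sc_succ]
      push_cast
      ring
    · rw [master_lin m w5 (-2) 0 0 (-1) 1 0 (by
        intro j
        simp only [w1, w2, w3, w4, w5, w6]
        rw [chi3_add_one j]
        ring)]
      have b1 : w5 1 = 1 := by norm_num [w5, chi3]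
      have b0 : w5 0 = 0 := by norm_num [w5, chi3]
      rw [b1, b0, cb, cb1, h1, h2, h3, h4, h5, h6]
      try simp only [Pc_succ, Sc_succ]
      push_cast
      push_cast at key
      linear_combination key
    · rw [master_lin m w6 0 (-4) 0 (-1) (-2) 1 (by
        intro j
        simp only [w1, w2, w3, w4, w5, w6]
        rw [chi3_add_one j]
        ring)]
      have b1 : w6 1 = 1 := by norm_num [w6, chi3]
      have b0 : w6 0 = 0 := by norm_num [w6, chi3]
      rw [b1, b0, cb, cb1, h1, h2, h3, h4, h5, h6]
      try simp only [Pc_succ, Sc_succ]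
      push_cast
      push_cast at key
      linear_combination key

lemma WS_w7 (n : ℕ) :
    WS n (fun j => chi3 (j + 1) * j ^ 2) = -WS n w3 - WS n w6 := by
  unfold WS
  have hs : ∀ j ∈ Icc 1 n, (fun j : ℤ => chi3 (j + 1) * j ^ 2) (j : ℤ) * chooseN (2 * n) ((n : ℤ) - j)
      = -(w3 (j : ℤ) * chooseN (2 * n) ((n : ℤ) - j)) + -(w6 (j : ℤ) * chooseN (2 * n) ((n : ℤ) - j)) := by
    intro j _
    simp only [w3, w6]
    rw [chi3_add_one (j : ℤ)]
    ring
  rw [sum_congr rfl hs, sum_add_distrib, sum_neg_distrib, sum_neg_distrib]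
  ring

lemma term_eq (d j : ℕ) (hj1 : 1 ≤ j) (hjd : j ≤ d + 1) :
    ((d : ℤ) + 1) * (2 * chooseN (2 * d) ((d : ℤ) - j) - ((d : ℤ) + 1) * catD d j)
      = (j : ℤ) ^ 2 * chooseN (2 * (d + 1)) (((d + 1 : ℕ) : ℤ) - j) := by
  unfold catD
  rcases Nat.lt_or_ge j (d + 1) with hlt | hge
  · -- 1 ≤ j ≤ d
    have hjle : j ≤ d := by omega
    obtain ⟨m, hmd⟩ : ∃ m : ℕ, (m : ℤ) = (d : ℤ) - j := ⟨d - j, by omega⟩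
    have e1 : (d : ℤ) - j = (m : ℤ) := hmd.symm
    have e2 : (d : ℤ) - 1 - j = (m : ℤ) - 1 := by omega
    have e3 : (d : ℤ) + 1 - j = (m : ℤ) + 1 := by omega
    have e4 : ((d + 1 : ℕ) : ℤ) - j = (m : ℤ) + 1 := by push_cast; omega
    rw [e1, e2, e3, e4]
    have hz : chooseN (2 * d) ((m : ℤ) + 1) = ((2 * d).choose (m + 1) : ℤ) := by
      rw [show (m : ℤ) + 1 = ((m + 1 : ℕ) : ℤ) by push_cast; ring, chooseN_ofNat]
    have hy : chooseN (2 * d) (m : ℤ) = ((2 * d).choose m : ℤ) := chooseN_ofNat _ _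
    have hm2d : m ≤ 2 * d := by omega
    have h1 : ((m : ℤ) + 1) * ((2 * d).choose (m + 1) : ℤ) = (2 * (d : ℤ) - m) * ((2 * d).choose m : ℤ) := by
      have h0 := congrArg (fun t : ℕ => (t : ℤ)) (Nat.choose_succ_right_eq (2 * d) m)
      push_cast [Nat.cast_sub hm2d] at h0
      linarith [h0]
    have h2 : (m : ℤ) * ((2 * d).choose m : ℤ) = (2 * (d : ℤ) - m + 1) * chooseN (2 * d) ((m : ℤ) - 1) := by
      rcases Nat.eq_zero_or_pos m with rfl | hpos
      · rw [show ((0 : ℕ) : ℤ) - 1 = -1 by norm_num, chooseN_neg (by norm_num)]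
        norm_num
      · obtain ⟨k, rfl⟩ : ∃ k, m = k + 1 := ⟨m - 1, by omega⟩
        have hx : chooseN (2 * d) (((k + 1 : ℕ) : ℤ) - 1) = ((2 * d).choose k : ℤ) := by
          rw [show ((k + 1 : ℕ) : ℤ) - 1 = ((k : ℕ) : ℤ) by push_cast; ring, chooseN_ofNat]
        rw [hx]
        have hk2d : k ≤ 2 * d := by omega
        have h0 := congrArg (fun t : ℕ => (t : ℤ)) (Nat.choose_succ_right_eq (2 * d) k)
        push_cast [Nat.cast_sub hk2d] at h0
        push_cast
        linarith [h0]
    have h3 : chooseN (2 * (d + 1)) ((m : ℤ) + 1)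
        = chooseN (2 * d) ((m : ℤ) + 1) + 2 * chooseN (2 * d) (m : ℤ) + chooseN (2 * d) ((m : ℤ) - 1) := by
      rw [show 2 * (d + 1) = 2 * d + 2 by ring, chooseN_pascal2,
        show (m : ℤ) + 1 - 1 = (m : ℤ) by ring, show (m : ℤ) + 1 - 2 = (m : ℤ) - 1 by ring]
    have hjm : (j : ℤ) = (d : ℤ) - m := by omega
    rw [hy, hz, h3, hy, hz, hjm]
    have hne : ((m : ℤ) + 1) * (2 * (d : ℤ) - m + 1) ≠ 0 := by
      have ha : (0 : ℤ) < (m : ℤ) + 1 := by omega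
      have hb : (0 : ℤ) < 2 * (d : ℤ) - m + 1 := by omega
      exact ne_of_gt (mul_pos ha hb)
    apply mul_left_cancel₀ hne
    linear_combination ((2 * (d : ℤ) - m + 1) * (((d : ℤ) + 1) ^ 2 - ((d : ℤ) - m) ^ 2)) * h1
      + (-((m : ℤ) + 1) * (((d : ℤ) + 1) ^ 2 - ((d : ℤ) - m) ^ 2)) * h2
  · -- j = d + 1
    have hj : j = d + 1 := by omega
    subst hj
    have e1 : (d : ℤ) - ((d + 1 : ℕ) : ℤ) = -1 := by push_cast; ring
    have e2 : (d : ℤ) - 1 - ((d + 1 : ℕ) : ℤ) = -2 := by push_cast; ring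
    have e3 : (d : ℤ) + 1 - ((d + 1 : ℕ) : ℤ) = 0 := by push_cast; ring
    have e4 : ((d + 1 : ℕ) : ℤ) - ((d + 1 : ℕ) : ℤ) = 0 := by ring
    rw [e1, e2, e3, e4, chooseN_neg (by norm_num), chooseN_neg (by norm_num)]
    have c0 : chooseN (2 * d) (0 : ℤ) = 1 := by
      rw [show (0 : ℤ) = ((0 : ℕ) : ℤ) by norm_num, chooseN_ofNat]; simp
    have c0' : chooseN (2 * (d + 1)) (0 : ℤ) = 1 := by
      rw [show (0 : ℤ) = ((0 : ℕ) : ℤ) by norm_num, chooseN_ofNat]; simp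
    rw [c0, c0']
    push_cast
    ring

lemma refl_sum (d : ℕ) :
    ∑ k ∈ range (d + 1), (k : ℤ) * (catalan (d - k) : ℤ) = Sc (d + 1) := by
  unfold Sc
  calc ∑ k ∈ range (d + 1), (k : ℤ) * (catalan (d - k) : ℤ)
      = ∑ k ∈ range (d + 1),
          (fun j : ℕ => (((d + 1 : ℕ) : ℤ) - 1 - (j : ℤ)) * (catalan j : ℤ)) (d + 1 - 1 - k) := by
        apply sum_congr rfl
        intro k hk
        have hk' : k ≤ d := by
          have := Finset.mem_range.mp hk; omega
        simp only
        have h1 : d + 1 - 1 - k = d - k := by omega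
        rw [h1]
        have h2 : ((d + 1 : ℕ) : ℤ) - 1 - ((d - k : ℕ) : ℤ) = (k : ℤ) := by
          have : ((d - k : ℕ) : ℤ) = (d : ℤ) - k := by omega
          push_cast
          omega
        rw [h2]
    _ = ∑ k ∈ range (d + 1), (((d + 1 : ℕ) : ℤ) - 1 - (k : ℤ)) * (catalan k : ℤ) := by
        simpa using Finset.sum_range_reflect
          (fun j : ℕ => (((d + 1 : ℕ) : ℤ) - 1 - (j : ℤ)) * (catalan j : ℤ)) (d + 1)

theorem catalan_convolution_recurrence (d : ℕ) :
    (∑ k ∈ Finset.range (d + 1), (k : ℤ) * (catalan (d - k) : ℤ)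
        = ∑ j ∈ Finset.Icc 1 (d + 1),
            chi3 ((j : ℤ) - 1) * (2 * chooseN (2 * d) ((d : ℤ) - j) - ((d : ℤ) + 1) * catD d j)
          - d)
    ∧ ∑ k ∈ Finset.range (d + 1), (k : ℤ) * (catalan (d - k) : ℤ)
        = ∑ j ∈ Finset.Icc 1 (d + 1),
            chi3 ((j : ℤ) + 1) * (2 * chooseN (2 * d) ((d : ℤ) - j) - ((d : ℤ) + 1) * catD d j)
          + 2 * d + 1 := by
  obtain ⟨-, -, h3, -, -, h6⟩ := closed_forms (d + 1)
  have hne : ((d : ℤ) + 1) ≠ 0 := by positivity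
  constructor
  · -- first identity
    have hmul : ((d : ℤ) + 1) * (∑ j ∈ Finset.Icc 1 (d + 1),
        chi3 ((j : ℤ) - 1) * (2 * chooseN (2 * d) ((d : ℤ) - j) - ((d : ℤ) + 1) * catD d j))
        = WS (d + 1) w3 := by
      rw [mul_sum]
      unfold WS
      apply sum_congr rfl
      intro j hj
      obtain ⟨hj1, hj2⟩ := Finset.mem_Icc.mp hj
      have ht := term_eq d j hj1 hj2
      simp only [w3]
      linear_combination chi3 ((j : ℤ) - 1) * ht
    have hS : ∑ j ∈ Finset.Icc 1 (d + 1),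
        chi3 ((j : ℤ) - 1) * (2 * chooseN (2 * d) ((d : ℤ) - j) - ((d : ℤ) + 1) * catD d j)
        = Sc (d + 1) + d := by
      apply mul_left_cancel₀ hne
      rw [hmul, h3]
      push_cast
      ring
    rw [refl_sum, hS]
    ring
  · -- second identity
    have hmul : ((d : ℤ) + 1) * (∑ j ∈ Finset.Icc 1 (d + 1),
        chi3 ((j : ℤ) + 1) * (2 * chooseN (2 * d) ((d : ℤ) - j) - ((d : ℤ) + 1) * catD d j))
        = WS (d + 1) (fun j => chi3 (j + 1) * j ^ 2) := by
      rw [mul_sum]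
      unfold WS
      apply sum_congr rfl
      intro j hj
      obtain ⟨hj1, hj2⟩ := Finset.mem_Icc.mp hj
      have ht := term_eq d j hj1 hj2
      simp only
      linear_combination chi3 ((j : ℤ) + 1) * ht
    have hS : ∑ j ∈ Finset.Icc 1 (d + 1),
        chi3 ((j : ℤ) + 1) * (2 * chooseN (2 * d) ((d : ℤ) - j) - ((d : ℤ) + 1) * catD d j)
        = Sc (d + 1) - 2 * d - 1 := by
      apply mul_left_cancel₀ hne
      rw [hmul, WS_w7, h3, h6]
      push_cast
      ring
    rw [refl_sum, hS]
    ring
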